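/- Assume κ is an uncountable regular strong limit cardinal (a strongly inaccessible cardinal). Let X be the subspace of the ordinal space κ + 1 (the ordinals ≤ κ with the order topology) obtained by removing all limit ordinals except κ itself. Then X is a Hausdorff topological space that is injectively core compact but not locally compact (in particular X is not core compact). -/

import Mathlib

open TopologicalSpace
/-- A topological space is *core compact* if for every point `x` and open set `U ∋ x`
there is an open `V ∋ x` such that every open cover of `U` has a finite subfamily
covering `V`. -/
def CoreCompact (Y : Type*) [TopologicalSpace Y] : Prop :=
  ∀ (x : Y) (U : Set Y), IsOpen U → x ∈ U →
    ∃ V : Set Y, IsOpen V ∧ x ∈ V ∧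
      ∀ 𝒰 : Set (Set Y), (∀ W ∈ 𝒰, IsOpen W) → U ⊆ ⋃₀ 𝒰 →
        ∃ F : Finset (Set Y), ↑F ⊆ 𝒰 ∧ V ⊆ ⋃₀ ↑F


/-- The adherence of a filter: its set of cluster points. -/
def adh {Y : Type*} [TopologicalSpace Y] (F : Filter Y) : Set Y :=
  {y | ClusterPt y F}

/-- The infimum (in the order where a filter is smaller when it is coarser, i.e. has
fewer sets) of a family of filters: the coarsest filter contained in every member,
whose elements are exactly the sets belonging to all members, equivalently the sets
`⋃ᵢ Hᵢ` with `Hᵢ ∈ ℋᵢ`.  In Mathlib's order on filters this is the supremum. -/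
def filterInfimum {Y : Type*} (H : Set (Filter Y)) : Filter Y :=
  sSup H

/-- A topological space is *injectively core compact* if for every `x`, every open
`U ∋ x` and every family `ℍ` of filters admitting an injection `θ` of `ℍ` into the
open supersets of `U` with `adh ℋ ∩ θ ℋ = ∅` for all `ℋ ∈ ℍ`, the point `x` is not a
cluster point of the infimum filter `⋀_{ℋ ∈ ℍ} ℋ`. -/
def InjCoreCompact (Y : Type*) [TopologicalSpace Y] : Prop :=
  ∀ (x : Y) (U : Set Y), IsOpen U → x ∈ U →
    ∀ (H : Set (Filter Y)) (θ : Filter Y → Set Y),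
      (∀ F ∈ H, IsOpen (θ F) ∧ U ⊆ θ F) →
      Set.InjOn θ H →
      (∀ F ∈ H, adh F ∩ θ F = ∅) →
      x ∉ adh (filterInfimum H)

/-- The subspace of the ordinal space `κ + 1` (ordinals `≤ κ.ord`, order topology)
obtained by removing all limit ordinals except `κ` itself, with the subspace
topology. -/
abbrev InaccSpace (κ : Cardinal.{0}) : Type 1 :=
  {o : Ordinal.{0} // o ≤ κ.ord ∧ (Order.IsSuccLimit o → o = κ.ord)}


namespace InaccHelper
open Cardinal Ordinal Set Filter
variable {κ : Cardinal.{0}}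

noncomputable def kpt (κ : Cardinal.{0}) : InaccSpace κ := ⟨κ.ord, le_rfl, fun _ => rfl⟩

lemma isOpen_high (a : Ordinal) : IsOpen {y : InaccSpace κ | a < y.val} :=
  isOpen_Ioi.preimage continuous_subtype_val

lemma isOpen_single {y : InaccSpace κ} (hy : y.val ≠ Cardinal.ord κ) :
    IsOpen ({y} : Set (InaccSpace κ)) := by
  have h1 : IsOpen ({y.val} : Set Ordinal) := by
    rw [Ordinal.isOpen_iff]
    rintro o rfl ho
    exact absurd (y.2.2 ho) hy
  have h2 : ({y} : Set (InaccSpace κ)) = Subtype.val ⁻¹' {y.val} := by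
    ext z
    simp [Subtype.ext_iff]
  rw [h2]
  exact h1.preimage continuous_subtype_val

lemma mem_nhds_top (hk : Order.IsSuccLimit (Cardinal.ord κ)) {V : Set (InaccSpace κ)}
    (hV : V ∈ nhds (kpt κ)) : ∃ a < Cardinal.ord κ, {y : InaccSpace κ | a < y.val} ⊆ V := by
  obtain ⟨O, hOV, hO, hxO⟩ := mem_nhds_iff.1 hV
  obtain ⟨O', hO', rfl⟩ := isOpen_induced_iff.1 hO
  obtain ⟨a, ha, hIoo⟩ := (Ordinal.isOpen_iff.1 hO') _ hxO hk
  refine ⟨a, ha, fun y hy => hOV ?_⟩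
  rcases eq_or_lt_of_le y.2.1 with h | h
  · show y.val ∈ O'
    rw [h]; exact hxO
  · exact hIoo ⟨hy, h⟩


lemma no_finite_cover (huncount : Cardinal.aleph0 < κ) {a : Ordinal} (ha : a < Cardinal.ord κ)
    {V : Set (InaccSpace κ)} (hV : {y : InaccSpace κ | a < y.val} ⊆ V)
    (hcov : ∀ 𝒰 : Set (Set (InaccSpace κ)), (∀ W ∈ 𝒰, IsOpen W) →
      (Set.univ : Set (InaccSpace κ)) ⊆ ⋃₀ 𝒰 →
      ∃ F : Finset (Set (InaccSpace κ)), ↑F ⊆ 𝒰 ∧ V ⊆ ⋃₀ ↑F) : False := by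
  have hc : a + Ordinal.omega0 < Cardinal.ord κ := by
    rw [Cardinal.lt_ord, Ordinal.card_add, Ordinal.card_omega0]
    exact Cardinal.add_lt_of_lt huncount.le (Cardinal.lt_ord.1 ha) huncount
  -- the points a + (n+1)
  have hyval : ∀ n : ℕ, a + ((n : Ordinal) + 1) < a + Ordinal.omega0 := fun n => by
    apply (add_lt_add_iff_left a).2
    exact Ordinal.nat_lt_omega0 (n + 1)
  have hynl : ∀ n : ℕ, ¬ Order.IsSuccLimit (a + ((n : Ordinal) + 1)) := fun n => by
    rw [← add_assoc, Ordinal.add_one_eq_succ]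
    exact Order.not_isSuccLimit_succ _
  set y : ℕ → InaccSpace κ := fun n =>
    ⟨a + ((n : Ordinal) + 1), ((hyval n).trans hc).le, fun h => absurd h (hynl n)⟩ with hy
  have hyinj : Function.Injective y := by
    intro n m h
    have : a + ((n : Ordinal) + 1) = a + ((m : Ordinal) + 1) := congrArg Subtype.val h
    have := (add_right_inj a).1 this
    have h2 : ((n + 1 : ℕ) : Ordinal) = ((m + 1 : ℕ) : Ordinal) := by push_cast; exact this
    exact_mod_cast Nat.succ_injective (by exact_mod_cast h2)
  set 𝒰 : Set (Set (InaccSpace κ)) :=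
    {S | ∃ z : InaccSpace κ, z.val ≠ Cardinal.ord κ ∧ S = {z}} ∪
      {{y : InaccSpace κ | a + Ordinal.omega0 < y.val}} with h𝒰
  have hopen : ∀ W ∈ 𝒰, IsOpen W := by
    rintro W (⟨z, hz, rfl⟩ | rfl)
    · exact isOpen_single hz
    · exact isOpen_high _
  have hcover : (Set.univ : Set (InaccSpace κ)) ⊆ ⋃₀ 𝒰 := by
    intro z _
    by_cases hz : z.val = Cardinal.ord κ
    · exact ⟨_, Or.inr rfl, by show a + Ordinal.omega0 < z.val; rw [hz]; exact hc⟩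
    · exact ⟨{z}, Or.inl ⟨z, hz, rfl⟩, rfl⟩
  obtain ⟨F, hF𝒰, hVF⟩ := hcov 𝒰 hopen hcover
  have hmem : ∀ n : ℕ, ({y n} : Set (InaccSpace κ)) ∈ F := by
    intro n
    have hyV : y n ∈ V := hV (by
      show a < a + ((n : Ordinal) + 1)
      nth_rewrite 1 [← add_zero a]
      apply (add_lt_add_iff_left a).2
      exact lt_of_lt_of_le zero_lt_one (le_add_self (a := (1 : Ordinal)) (b := (n : Ordinal))))
    obtain ⟨S, hSF, hyS⟩ := hVF hyV
    rcases hF𝒰 hSF with ⟨z, _, rfl⟩ | rfl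
    · rw [Set.mem_singleton_iff] at hyS
      rw [← hyS] at hSF
      exact hSF
    · exact absurd hyS (by simp [hy])
  have hinf : (Set.range fun n => ({y n} : Set (InaccSpace κ))).Infinite :=
    Set.infinite_range_of_injective fun n m h => hyinj (Set.singleton_eq_singleton_iff.1 h)
  exact hinf ((F.finite_toSet).subset (Set.range_subset_iff.2 hmem))

lemma inj (huncount : Cardinal.aleph0 < κ) (hreg : κ.IsRegular) (hsl : κ.IsStrongLimit) :
    InjCoreCompact (InaccSpace κ) := by
  classical
  intro x U hU hxU H θ hθ hinj hadh hcl
  have hlim : Order.IsSuccLimit (Cardinal.ord κ) := Cardinal.isSuccLimit_ord huncount.le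
  have hxnadh : ∀ F ∈ H, ¬ ClusterPt x F := by
    intro F hF hc
    have h1 : x ∈ adh F ∩ θ F := ⟨hc, (hθ F hF).2 hxU⟩
    rw [hadh F hF] at h1
    exact h1
  have hcl' : ClusterPt x (sSup H) := hcl
  by_cases hx : x.val = Cardinal.ord κ
  case neg =>
    have hst : ∀ F ∈ H, ∃ t ∈ F, x ∉ t := by
      intro F hF
      have h1 := hxnadh F hF
      rw [clusterPt_iff_nonempty] at h1
      push_neg at h1
      obtain ⟨W, hW, t, ht, hWt⟩ := h1
      exact ⟨t, ht, fun hxt => Set.eq_empty_iff_forall_notMem.1 hWt x ⟨mem_of_mem_nhds hW, hxt⟩⟩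
    choose! t ht hxt using hst
    have hT : (⋃ F ∈ H, t F) ∈ sSup H := by
      rw [Filter.mem_sSup]
      intro F hF
      exact Filter.mem_of_superset (ht F hF) (Set.subset_biUnion_of_mem hF)
    obtain ⟨z, hz1, hz2⟩ := clusterPt_iff_nonempty.1 hcl' ((isOpen_single hx).mem_nhds rfl) hT
    rw [Set.mem_singleton_iff] at hz1
    subst hz1
    simp only [Set.mem_iUnion] at hz2
    obtain ⟨F, hF, hzF⟩ := hz2
    exact hxt F hF hzF
  case pos =>
    have hxk : x = kpt κ := Subtype.ext hx
    subst hxk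
    obtain ⟨a, ha, haU⟩ := mem_nhds_top hlim (hU.mem_nhds hxU)
    have hst : ∀ F ∈ H, ∃ t ∈ F, ∃ b < Cardinal.ord κ, ∀ z ∈ t, z.val ≤ b := by
      intro F hF
      have h1 := hxnadh F hF
      rw [clusterPt_iff_nonempty] at h1
      push_neg at h1
      obtain ⟨W, hW, tt, htt, hWt⟩ := h1
      obtain ⟨b, hb, hbW⟩ := mem_nhds_top hlim hW
      refine ⟨tt, htt, b, hb, fun z hz => ?_⟩
      by_contra hzb
      push_neg at hzb
      exact Set.eq_empty_iff_forall_notMem.1 hWt z ⟨hbW hzb, hz⟩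
    choose! t ht b hb htb using hst
    set T0 := (a + 1).ToType with hT0
    set e := Ordinal.ToType.mk (o := a + 1) with he
    set code : Set (InaccSpace κ) → Set T0 := fun W =>
      {i | ∃ z : InaccSpace κ, z.val = (e.symm i).val ∧ z ∈ W} with hcode
    have hkey : ∀ W W' : Set (InaccSpace κ), U ⊆ W → U ⊆ W' → code W = code W' → W = W' := by
      have main : ∀ A B : Set (InaccSpace κ), U ⊆ A → U ⊆ B → code A = code B → A ⊆ B := by
        intro A B hUA hUB hAB z hzA
        rcases le_or_gt z.val a with hza | hza
        · have hz1 : z.val < a + 1 := by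
            rw [Ordinal.add_one_eq_succ, Order.lt_succ_iff]
            exact hza
          have h2 : e ⟨z.val, hz1⟩ ∈ code A := ⟨z, by rw [OrderIso.symm_apply_apply], hzA⟩
          rw [hAB] at h2
          obtain ⟨z', hz', hz'B⟩ := h2
          rw [OrderIso.symm_apply_apply] at hz'
          have h3 : z' = z := Subtype.ext hz'
          rwa [← h3]
        · exact hUB (haU hza)
      exact fun W W' hW hW' hcc =>
        Set.Subset.antisymm (main W W' hW hW' hcc) (main W' W hW' hW hcc.symm)
    have hcard : #(Set T0) < κ := by
      rw [hT0, Cardinal.mk_set, Cardinal.mk_toType, Ordinal.card_add, Ordinal.card_one]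
      exact hsl.two_power_lt
        (Cardinal.add_lt_of_lt hreg.aleph0_le (Cardinal.lt_ord.1 ha)
          (Cardinal.one_lt_aleph0.trans huncount))
    set g : Set T0 → Ordinal := fun i =>
      if h : ∃ F ∈ H, code (θ F) = i then b h.choose else 0 with hg
    have hgb : ∀ F ∈ H, b F ≤ iSup g := by
      intro F hF
      have hex : ∃ F' ∈ H, code (θ F') = code (θ F) := ⟨F, hF, rfl⟩
      have h1 : g (code (θ F)) = b hex.choose := dif_pos hex
      obtain ⟨hmem, heq⟩ := hex.choose_spec
      have h2 : hex.choose = F := hinj hmem hF (hkey _ _ (hθ _ hmem).2 (hθ _ hF).2 heq)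
      rw [h2] at h1
      rw [← h1]
      exact Ordinal.le_iSup g _
    have hs : iSup g < Cardinal.ord κ := by
      apply Ordinal.iSup_lt_ord
      · rw [hreg.cof_eq]
        exact hcard
      · intro i
        split
        · next h => exact hb _ h.choose_spec.1
        · exact hlim.pos
    have hT : (⋃ F ∈ H, t F) ∈ sSup H := by
      rw [Filter.mem_sSup]
      intro F hF
      exact Filter.mem_of_superset (ht F hF) (Set.subset_biUnion_of_mem hF)
    have hW : {y : InaccSpace κ | iSup g < y.val} ∈ nhds (kpt κ) :=
      (isOpen_high _).mem_nhds hs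
    obtain ⟨z, hz1, hz2⟩ := clusterPt_iff_nonempty.1 hcl' hW hT
    simp only [Set.mem_iUnion] at hz2
    obtain ⟨F, hF, hzF⟩ := hz2
    exact absurd hz1 (not_lt.2 ((htb F hF z hzF).trans (hgb F hF)))

end InaccHelper

/-- If `κ` is an uncountable regular strong limit cardinal (i.e. strongly
inaccessible), then the subspace of `κ + 1` consisting of `κ` and the non-limit
ordinals is a Hausdorff space that is injectively core compact but not locally
compact; in particular it is not core compact. -/
theorem inaccSpace_injCoreCompact_not_locallyCompact (κ : Cardinal.{0})
    (huncount : Cardinal.aleph0 < κ) (hreg : κ.IsRegular) (hsl : κ.IsStrongLimit) :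
    T2Space (InaccSpace κ) ∧ InjCoreCompact (InaccSpace κ) ∧
      ¬ LocallyCompactSpace (InaccSpace κ) ∧ ¬ CoreCompact (InaccSpace κ) := by
  classical
  open InaccHelper Cardinal Ordinal Set Filter in
  refine ⟨inferInstance, inj huncount hreg hsl, ?_, ?_⟩
  · -- not locally compact
    intro hLC
    obtain ⟨K, hK, _, hKcomp⟩ := hLC.local_compact_nhds (kpt κ) Set.univ Filter.univ_mem
    obtain ⟨a, ha, haK⟩ := mem_nhds_top (Cardinal.isSuccLimit_ord huncount.le) hK
    refine no_finite_cover huncount ha haK fun 𝒰 h𝒰 hcov => ?_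
    obtain ⟨b', hb'𝒰, hb'fin, hKb'⟩ := hKcomp.elim_finite_subcover_image
      (fun W hW => h𝒰 W hW) (by simpa [Set.sUnion_eq_biUnion] using hcov.trans (subset_refl _) |>.trans (le_refl _) |> fun h => (Set.subset_univ K).trans (by rwa [Set.sUnion_eq_biUnion] at hcov))
    refine ⟨hb'fin.toFinset, by simpa using hb'𝒰, ?_⟩
    rwa [Set.sUnion_eq_biUnion, Set.Finite.coe_toFinset]
  · -- not core compact
    intro hCC
    obtain ⟨V, hVopen, hVmem, hVprop⟩ :=
      hCC (kpt κ) Set.univ isOpen_univ (Set.mem_univ _)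
    obtain ⟨a, ha, haV⟩ := mem_nhds_top (Cardinal.isSuccLimit_ord huncount.le)
      (hVopen.mem_nhds hVmem)
    exact no_finite_cover huncount ha haV fun 𝒰 h𝒰 hcov => hVprop 𝒰 h𝒰 hcov
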